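/- Let m ≥ 2 and n ≥ 0 be integers and let α be a nonzero complex number. Then for all 1 ≤ i ≤ m and 0 ≤ j ≤ m−1, |A_{i,j,n+1}(α)| ≤ ( 2^m (1+|α|) / |α| ) · (n+1)^m · ( (1+|α|)·2^m )^{n+1} · (n!)^{−m}. -/

import Mathlib

/-- `a i h j` (for `1 ≤ i ≤ m`, `0 ≤ h ≤ n+1`, `1 ≤ j ≤ m`) are the partial fraction
coefficients of `1/Q_{m,i,n+1}(x)` where `Q_{m,i,n+1}(x) = (∏_{h=0}^n (x−h)^m)·(x−(n+1))^i`. -/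
def IsPFD (m n : ℕ) (a : ℕ → ℕ → ℕ → ℚ) : Prop :=
  ∀ i : ℕ, 1 ≤ i → i ≤ m → ∀ x : ℚ, (∀ h : ℕ, h ≤ n + 1 → x ≠ (h : ℚ)) →
    ((∏ h ∈ Finset.range (n + 1), (x - (h : ℚ)) ^ m) * (x - ((n + 1 : ℕ) : ℚ)) ^ i)⁻¹ =
      ∑ h ∈ Finset.range (n + 2), ∑ j ∈ Finset.range m,
        a i h (j + 1) / (x - (h : ℚ)) ^ (j + 1)

/-- The polynomial `A_{i,j,n+1}(z) = (Σ_{h=0}^{n+1} a_{h,j+1}^{(i)} (1+z)^h)/j!`. -/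
noncomputable def padeA (n : ℕ) (a : ℕ → ℕ → ℕ → ℚ) (i j : ℕ) : Polynomial ℚ :=
  Polynomial.C ((j.factorial : ℚ))⁻¹ *
    ∑ h ∈ Finset.range (n + 2), Polynomial.C (a i h (j + 1)) * (1 + Polynomial.X) ^ h


open Polynomial Finset

open Polynomial Finset

lemma pf_choose_le_add (N k t : ℕ) : N.choose k ≤ (N + t).choose (k + t) := by
  induction t with
  | zero => simp
  | succ t ih =>
    calc N.choose k ≤ (N + t).choose (k + t) := ih
    _ ≤ (N + t + 1).choose (k + t + 1) := by
        rw [Nat.choose_succ_succ]; exact Nat.le_add_right _ _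

lemma pf_central_le : ∀ m : ℕ, (2 * m).choose m ≤ 4 ^ m := by
  intro m
  have h1 : (2 * m).choose m ≤ ∑ t ∈ range (2 * m + 1), (2 * m).choose t :=
    Finset.single_le_sum (fun t _ => Nat.zero_le _) (by simp [Nat.lt_succ_iff]; omega)
  calc (2*m).choose m ≤ ∑ t ∈ range (2*m+1), (2*m).choose t := h1
  _ = 2 ^ (2 * m) := Nat.sum_range_choose (2 * m)
  _ = 4 ^ m := by rw [pow_mul]; norm_num

lemma pf_dagger (m n : ℕ) (hm : 2 ≤ m) :
    (m * (n + 2) - 2).choose (m - 1) ≤ 4 ^ m * (n + 1) ^ m := by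
  have h4 : 4 ≤ m * (n + 2) := by nlinarith
  have step1 : (m * (n + 2) - 2).choose (m - 1) ≤ (m * (n + 2)).choose m := by
    have := pf_choose_le_add (m * (n + 2) - 2) (m - 1) 1
    have h2 : m * (n + 2) - 2 + 1 = m * (n + 2) - 1 := by omega
    have h3 : m - 1 + 1 = m := by omega
    rw [h2, h3] at this
    exact this.trans (Nat.choose_le_choose m (by omega))
  refine step1.trans ?_
  -- m! * C(m(n+2), m) = descFactorial ≤ (n+1)^m * (m! * C(2m,m))
  have key : (m * (n + 2)).descFactorial m ≤ (n + 1) ^ m * (2 * m).descFactorial m := by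
    rw [Nat.descFactorial_eq_prod_range, Nat.descFactorial_eq_prod_range]
    have hrw : (n + 1) ^ m * ∏ i ∈ range m, (2 * m - i) = ∏ i ∈ range m, ((n + 1) * (2 * m - i)) := by
      rw [Finset.prod_mul_distrib, Finset.prod_const, Finset.card_range]
    rw [hrw]
    refine Finset.prod_le_prod' ?_
    intro t ht
    rw [Finset.mem_range] at ht
    obtain ⟨A, hA⟩ := Nat.le.dest ht.le
    have h2m : 2 * m - t = m + A := by omega
    rw [h2m, Nat.sub_le_iff_le_add]
    calc m * (n + 2) ≤ m * (n + 2) + n * A := Nat.le_add_right _ _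
    _ = (n + 1) * (m + A) + t := by subst hA; ring
  have hd1 : (m * (n + 2)).descFactorial m = m.factorial * (m * (n + 2)).choose m :=
    Nat.descFactorial_eq_factorial_mul_choose _ _
  have hd2 : (2 * m).descFactorial m = m.factorial * (2 * m).choose m :=
    Nat.descFactorial_eq_factorial_mul_choose _ _
  rw [hd1, hd2] at key
  have key2 : m.factorial * (m * (n + 2)).choose m ≤ m.factorial * ((n + 1) ^ m * (2 * m).choose m) := by
    calc m.factorial * (m * (n + 2)).choose m ≤ (n+1)^m * (m.factorial * (2*m).choose m) := key
    _ = m.factorial * ((n + 1) ^ m * (2 * m).choose m) := by ring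
  have := Nat.le_of_mul_le_mul_left key2 (Nat.factorial_pos m)
  calc (m * (n + 2)).choose m ≤ (n + 1) ^ m * (2 * m).choose m := this
  _ ≤ (n + 1) ^ m * 4 ^ m := Nat.mul_le_mul_left _ (pf_central_le m)
  _ = 4 ^ m * (n + 1) ^ m := by ring

lemma pf_hockey (W k : ℕ) : ∑ r ∈ range (k + 1), (W + r).choose r = (W + k + 1).choose k := by
  induction k with
  | zero => simp
  | succ k ih =>
    rw [Finset.sum_range_succ, ih]
    have : W + (k + 1) + 1 = (W + k + 1) + 1 := by ring
    rw [this, Nat.choose_succ_succ (W + k + 1) k]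
    rfl

open Polynomial Finset

noncomputable def gpoly (m : ℕ) : Polynomial ℚ := ∑ s ∈ range m, X ^ s

noncomputable def upoly (m : ℕ) (d : ℚ) : Polynomial ℚ :=
  ∑ s ∈ range m, C (d⁻¹ * (-d⁻¹) ^ s) * X ^ s

lemma gpoly_coeff (m k : ℕ) : (gpoly m).coeff k = if k < m then 1 else 0 := by
  rw [gpoly, Polynomial.finset_sum_coeff]
  simp only [Polynomial.coeff_X_pow]
  rw [Finset.sum_ite_eq (range m) k (fun _ => (1:ℚ))]
  simp [Finset.mem_range]

lemma upoly_coeff (m k : ℕ) (d : ℚ) :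
    (upoly m d).coeff k = if k < m then d⁻¹ * (-d⁻¹) ^ k else 0 := by
  rw [upoly, Polynomial.finset_sum_coeff]
  simp only [Polynomial.coeff_C_mul, Polynomial.coeff_X_pow, mul_ite, mul_one, mul_zero]
  rw [Finset.sum_ite_eq (range m) k (fun s => d⁻¹ * (-d⁻¹) ^ s)]
  simp [Finset.mem_range]

/-- coefficients of powers of `gpoly` are nonnegative -/
lemma gpow_coeff_nonneg (m : ℕ) : ∀ (W k : ℕ), 0 ≤ ((gpoly m) ^ W).coeff k := by
  intro W
  induction W with
  | zero => intro k; simp [Polynomial.coeff_one]; positivity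
  | succ W ih =>
    intro k
    rw [pow_succ, Polynomial.coeff_mul]
    refine Finset.sum_nonneg fun p _ => mul_nonneg (ih p.1) ?_
    rw [gpoly_coeff]; positivity

lemma gpow_coeff_le (m : ℕ) : ∀ (W k : ℕ), ((gpoly m) ^ (W + 1)).coeff k ≤ ((W + k).choose k : ℚ) := by
  intro W
  induction W with
  | zero =>
    intro k
    rw [pow_one, gpoly_coeff]
    split <;> simp
  | succ W ih =>
    intro k
    rw [pow_succ, Polynomial.coeff_mul, Finset.Nat.sum_antidiagonal_eq_sum_range_succ_mk]
    have hb : ∀ r ∈ range (k + 1), ((gpoly m) ^ (W+1)).coeff r * (gpoly m).coeff (k - r)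
        ≤ ((W + r).choose r : ℚ) := by
      intro r _
      have h1 := ih r
      have h2 : (gpoly m).coeff (k - r) ≤ 1 := by rw [gpoly_coeff]; split <;> norm_num
      have h3 : 0 ≤ (gpoly m).coeff (k - r) := by rw [gpoly_coeff]; split <;> norm_num
      calc ((gpoly m) ^ (W+1)).coeff r * (gpoly m).coeff (k - r)
          ≤ ((W + r).choose r : ℚ) * 1 := by
            apply mul_le_mul h1 h2 h3 (by positivity)
      _ = ((W + r).choose r : ℚ) := by ring
    calc (∑ r ∈ range (k+1), ((gpoly m) ^ (W+1)).coeff r * (gpoly m).coeff (k - r))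
        ≤ ∑ r ∈ range (k+1), ((W + r).choose r : ℚ) := Finset.sum_le_sum hb
    _ = (((W + k + 1).choose k : ℕ) : ℚ) := by
        rw [← Nat.cast_sum]
        norm_cast
        exact pf_hockey W k
    _ = ((W + 1 + k).choose k : ℚ) := by norm_num; ring_nf

/-- domination by `e * gpoly^W` -/
def DomG (m : ℕ) (p : Polynomial ℚ) (e : ℚ) (W : ℕ) : Prop :=
  ∀ k, |p.coeff k| ≤ e * ((gpoly m) ^ W).coeff k

lemma DomG.mul {m : ℕ} {p q : Polynomial ℚ} {e f : ℚ} {W V : ℕ}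
    (he : 0 ≤ e) (hf : 0 ≤ f)
    (hp : DomG m p e W) (hq : DomG m q f V) : DomG m (p * q) (e * f) (W + V) := by
  intro k
  rw [Polynomial.coeff_mul, pow_add, Polynomial.coeff_mul, Finset.mul_sum]
  refine (Finset.abs_sum_le_sum_abs _ _).trans (Finset.sum_le_sum fun x _ => ?_)
  rw [abs_mul]
  calc |p.coeff x.1| * |q.coeff x.2| ≤ (e * ((gpoly m)^W).coeff x.1) * (f * ((gpoly m)^V).coeff x.2) := by
        apply mul_le_mul (hp x.1) (hq x.2) (abs_nonneg _)
        exact mul_nonneg he (gpow_coeff_nonneg m W x.1)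
  _ = e * f * (((gpoly m)^W).coeff x.1 * ((gpoly m)^V).coeff x.2) := by ring

lemma DomG.pow {m : ℕ} {p : Polynomial ℚ} {e : ℚ} {W : ℕ} (he : 0 ≤ e)
    (hp : DomG m p e W) : ∀ t : ℕ, DomG m (p ^ t) (e ^ t) (W * t) := by
  intro t
  induction t with
  | zero =>
    intro k
    simp only [pow_zero, mul_zero, Polynomial.coeff_one, one_mul]
    split <;> simp_all
  | succ t ih =>
    have := DomG.mul (pow_nonneg he t) he ih hp
    rw [← pow_succ, ← pow_succ] at this
    have h2 : W * t + W = W * (t + 1) := by ring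
    rwa [h2] at this

lemma DomG.one (m : ℕ) : DomG m 1 1 0 := by
  intro k
  simp only [pow_zero, Polynomial.coeff_one, one_mul]
  split <;> simp_all

lemma DomG.prod {m : ℕ} {ι : Type*} [DecidableEq ι] {s : Finset ι} {F : ι → Polynomial ℚ} {e : ι → ℚ} {W : ℕ}
    (he : ∀ l ∈ s, 0 ≤ e l) (hF : ∀ l ∈ s, DomG m (F l) (e l) W) :
    DomG m (∏ l ∈ s, F l) (∏ l ∈ s, e l) (W * s.card) := by
  induction s using Finset.induction with
  | empty => simpa using DomG.one m
  | @insert b s hb ih =>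
    rw [Finset.prod_insert hb, Finset.prod_insert hb, Finset.card_insert_of_notMem hb]
    have h1 := DomG.mul (he b (Finset.mem_insert_self b s))
      (Finset.prod_nonneg fun l hl => he l (Finset.mem_insert_of_mem hl))
      (hF b (Finset.mem_insert_self b s))
      (ih (fun l hl => he l (Finset.mem_insert_of_mem hl))
          (fun l hl => hF l (Finset.mem_insert_of_mem hl)))
    have h2 : W + W * s.card = W * (s.card + 1) := by ring
    rwa [h2] at h1

lemma DomG.upoly (m : ℕ) {d : ℚ} (hd : 1 ≤ |d|) : DomG m (upoly m d) |d|⁻¹ 1 := by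
  intro k
  rw [upoly_coeff, pow_one, gpoly_coeff]
  have hd0 : d ≠ 0 := by intro h; rw [h, abs_zero] at hd; exact absurd hd (by norm_num)
  split
  · rw [abs_mul, abs_pow, abs_neg, abs_inv, mul_one]
    calc |d|⁻¹ * |d|⁻¹ ^ k ≤ |d|⁻¹ * 1 := by
          apply mul_le_mul_of_nonneg_left _ (by positivity)
          apply pow_le_one₀ (by positivity)
          rw [inv_le_one_iff₀]; right; exact hd
    _ = |d|⁻¹ := by ring
  · simp


lemma upoly_inv (m : ℕ) {d : ℚ} (hd : d ≠ 0) :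
    ∃ w : Polynomial ℚ, (X + C d) * upoly m d = 1 + X ^ m * w := by
  refine ⟨-(C ((-d⁻¹) ^ m)), ?_⟩
  have key : upoly m d = C d⁻¹ * ∑ s ∈ range m, (C (-d⁻¹) * X) ^ s := by
    rw [upoly, Finset.mul_sum]
    refine Finset.sum_congr rfl fun s _ => ?_
    rw [mul_pow, ← C_pow, ← mul_assoc, ← C_mul]
  have hCd : C d * C d⁻¹ = (1 : Polynomial ℚ) := by rw [← C_mul, mul_inv_cancel₀ hd, C_1]
  have hg := geom_sum_mul (C (-d⁻¹) * X) m
  have hrm : (C (-d⁻¹) * X) ^ m = C ((-d⁻¹) ^ m) * X ^ m := by rw [mul_pow, C_pow]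
  rw [key]
  have hCneg : C (-d⁻¹) = -C d⁻¹ := by rw [C_neg]
  linear_combination (∑ s ∈ range m, (C (-d⁻¹) * X) ^ s) * hCd - hg - hrm
    + (∑ s ∈ range m, (C (-d⁻¹) * X) ^ s) * X * hCneg

/-- polynomials of the form 1 + X^m * w -/
def Unip (m : ℕ) (p : Polynomial ℚ) : Prop := ∃ w, p = 1 + X ^ m * w

lemma Unip.one (m : ℕ) : Unip m 1 := ⟨0, by ring⟩

lemma Unip.mul {m : ℕ} {p q : Polynomial ℚ} (hp : Unip m p) (hq : Unip m q) : Unip m (p * q) := by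
  obtain ⟨A, rfl⟩ := hp; obtain ⟨B, rfl⟩ := hq
  exact ⟨A + B + X ^ m * A * B, by ring⟩

lemma Unip.pow {m : ℕ} {p : Polynomial ℚ} (hp : Unip m p) (t : ℕ) : Unip m (p ^ t) := by
  induction t with
  | zero => simpa using Unip.one m
  | succ t ih => rw [pow_succ]; exact ih.mul hp

lemma Unip.prod {m : ℕ} {ι : Type*} {s : Finset ι} {F : ι → Polynomial ℚ}
    (hF : ∀ l ∈ s, Unip m (F l)) : Unip m (∏ l ∈ s, F l) := by
  induction s using Finset.cons_induction with
  | empty => simpa using Unip.one m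
  | cons b s hb ih =>
    rw [Finset.prod_cons]
    exact (hF b (Finset.mem_cons_self b s)).mul
      (ih fun l hl => hF l (Finset.mem_cons_of_mem hl))

/-- the rational-number identity, cleared of denominators -/
lemma pf_cleared (m n : ℕ) (a : ℕ → ℕ → ℕ → ℚ) (ha : IsPFD m n a) (i : ℕ)
    (hi : 1 ≤ i) (him : i ≤ m) (y : ℚ) (hy : ∀ h : ℕ, h ≤ n + 1 → y ≠ (h : ℚ)) :
    (y - ((n + 1 : ℕ) : ℚ)) ^ (m - i) =
      ∑ h ∈ range (n + 2), ∑ j ∈ range m, a i h (j + 1) * (y - (h : ℚ)) ^ (m - 1 - j) *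
        ∏ l ∈ (range (n + 2)).erase h, (y - (l : ℚ)) ^ m := by
  have hne : ∀ l : ℕ, l ≤ n + 1 → y - (l : ℚ) ≠ 0 := fun l hl => sub_ne_zero.mpr (hy l hl)
  set Q : ℚ := (∏ h ∈ range (n + 1), (y - (h : ℚ)) ^ m) * (y - ((n + 1 : ℕ) : ℚ)) ^ i with hQdef
  set D : ℚ := ∏ l ∈ range (n + 2), (y - (l : ℚ)) ^ m with hDdef
  have hQne : Q ≠ 0 := by
    apply mul_ne_zero
    · exact Finset.prod_ne_zero_iff.mpr fun h hh =>
        pow_ne_zero _ (hne h (by have := Finset.mem_range.mp hh; omega))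
    · exact pow_ne_zero _ (hne (n + 1) le_rfl)
  have hD : D = Q * (y - ((n + 1 : ℕ) : ℚ)) ^ (m - i) := by
    rw [hDdef, hQdef, Finset.prod_range_succ]
    have : (y - ((n + 1 : ℕ) : ℚ)) ^ m
        = (y - ((n + 1 : ℕ) : ℚ)) ^ i * (y - ((n + 1 : ℕ) : ℚ)) ^ (m - i) := by
      rw [← pow_add]; congr 1; omega
    rw [this]; ring
  have h1 : (y - ((n + 1 : ℕ) : ℚ)) ^ (m - i) = D * Q⁻¹ := by
    rw [hD]; field_simp
  have hQ := ha i hi him y hy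
  rw [← hQdef] at hQ
  rw [h1, hQ, Finset.mul_sum]
  refine Finset.sum_congr rfl fun h hh => ?_
  rw [Finset.mul_sum]
  refine Finset.sum_congr rfl fun j hj => ?_
  have hDh : D = (y - (h : ℚ)) ^ m * ∏ l ∈ (range (n + 2)).erase h, (y - (l : ℚ)) ^ m :=
    (Finset.mul_prod_erase (range (n + 2)) (fun l => (y - (l : ℚ)) ^ m) hh).symm
  have hsplit : (y - (h : ℚ)) ^ m = (y - (h : ℚ)) ^ (j + 1) * (y - (h : ℚ)) ^ (m - 1 - j) := by
    rw [← pow_add]; congr 1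
    have := Finset.mem_range.mp hj; omega
  have hz : (y - (h : ℚ)) ^ (j + 1) ≠ 0 :=
    pow_ne_zero _ (hne h (by simpa [Nat.lt_succ_iff] using Finset.mem_range.mp hh))
  rw [hDh, hsplit, div_eq_mul_inv]
  field_simp

/-- the polynomial identity, shifted by h₀ -/
lemma pf_polyid (m n : ℕ) (a : ℕ → ℕ → ℕ → ℚ) (ha : IsPFD m n a) (i : ℕ)
    (hi : 1 ≤ i) (him : i ≤ m) (h₀ : ℕ) :
    (X + C ((h₀ : ℚ) - ((n + 1 : ℕ) : ℚ))) ^ (m - i) =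
      ∑ h ∈ range (n + 2), ∑ j ∈ range m, C (a i h (j + 1)) *
        (X + C ((h₀ : ℚ) - (h : ℚ))) ^ (m - 1 - j) *
        ∏ l ∈ (range (n + 2)).erase h, (X + C ((h₀ : ℚ) - (l : ℚ))) ^ m := by
  apply Polynomial.eq_of_infinite_eval_eq
  have hbad : (Set.Finite ((fun h : ℕ => (h : ℚ) - (h₀ : ℚ)) '' (Set.Iic (n + 1)))) :=
    (Set.finite_Iic (n + 1)).image _
  apply Set.Infinite.mono _ (hbad.infinite_compl)
  intro x hx
  simp only [Set.mem_compl_iff, Set.mem_image, Set.mem_Iic, not_exists, not_and] at hx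
  have hy : ∀ h : ℕ, h ≤ n + 1 → x + (h₀ : ℚ) ≠ (h : ℚ) := by
    intro h hh heq
    exact hx h hh (by linarith)
  have key := pf_cleared m n a ha i hi him (x + (h₀ : ℚ)) hy
  simp only [Set.mem_setOf_eq, eval_pow, eval_add, eval_mul, eval_X, eval_C, eval_finset_sum,
    eval_prod]
  have hxy : ∀ c : ℚ, x + ((h₀ : ℚ) - c) = x + (h₀ : ℚ) - c := fun c => by ring
  simp only [hxy]
  exact key


/-- generic extraction: if Rf inverts G mod X^m and N'·Rf ≡ T, then the PFD coefficients
at h₀ are the low coefficients of T -/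
lemma pf_extract (m n : ℕ) (a : ℕ → ℕ → ℕ → ℚ) (ha : IsPFD m n a) (i : ℕ)
    (hi : 1 ≤ i) (him : i ≤ m) (h₀ : ℕ) (hh₀ : h₀ ∈ range (n + 2))
    (Rf T : Polynomial ℚ)
    (hGRf : Unip m ((∏ l ∈ (range (n + 2)).erase h₀, (X + C ((h₀ : ℚ) - (l : ℚ))) ^ m) * Rf))
    (hNRf : ∃ V, (X + C ((h₀ : ℚ) - ((n + 1 : ℕ) : ℚ))) ^ (m - i) * Rf = T + X ^ m * V) :
    ∀ j, j < m → a i h₀ (j + 1) = T.coeff (m - 1 - j) := by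
  set G : Polynomial ℚ := ∏ l ∈ (range (n + 2)).erase h₀, (X + C ((h₀ : ℚ) - (l : ℚ))) ^ m with hG
  set S : Polynomial ℚ := ∑ j ∈ range m, C (a i h₀ (j + 1)) * X ^ (m - 1 - j) with hS
  set E : Polynomial ℚ := ∑ h ∈ (range (n + 2)).erase h₀, ∑ j ∈ range m,
      C (a i h (j + 1)) * (X + C ((h₀ : ℚ) - (h : ℚ))) ^ (m - 1 - j) *
      ∏ l ∈ ((range (n + 2)).erase h).erase h₀, (X + C ((h₀ : ℚ) - (l : ℚ))) ^ m with hE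
  have hid := pf_polyid m n a ha i hi him h₀
  have hsplit : (X + C ((h₀ : ℚ) - ((n + 1 : ℕ) : ℚ))) ^ (m - i) = S * G + X ^ m * E := by
    rw [hid, ← Finset.add_sum_erase _ _ hh₀]
    refine congrArg₂ (· + ·) ?_ ?_
    · rw [hS, Finset.sum_mul]
      refine Finset.sum_congr rfl fun j _ => ?_
      rw [sub_self, C_0, add_zero]
    · rw [hE, Finset.mul_sum]
      refine Finset.sum_congr rfl fun h hh => ?_
      have hmem : h₀ ∈ (range (n + 2)).erase h := by
        rw [Finset.mem_erase]
        exact ⟨fun hc => (Finset.mem_erase.mp hh).1 hc.symm, hh₀⟩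
      rw [← Finset.mul_prod_erase _ _ hmem, sub_self, C_0, add_zero, Finset.mul_sum]
      refine Finset.sum_congr rfl fun j _ => ?_
      ring
  obtain ⟨W, hW⟩ := hGRf
  obtain ⟨V, hV⟩ := hNRf
  have hkey : S = T + X ^ m * (V - E * Rf - S * W) := by
    have h1 : S * (G * Rf) = S + X ^ m * (S * W) := by rw [hW]; ring
    have h2 : S * (G * Rf) = T + X ^ m * V - X ^ m * (E * Rf) := by
      calc S * (G * Rf) = (S * G + X ^ m * E) * Rf - X ^ m * (E * Rf) := by ring
      _ = (X + C ((h₀ : ℚ) - ((n + 1 : ℕ) : ℚ))) ^ (m - i) * Rf - X ^ m * (E * Rf) := by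
          rw [← hsplit]
      _ = T + X ^ m * V - X ^ m * (E * Rf) := by rw [hV]
    have := h1.symm.trans h2
    linear_combination this
  intro j hj
  have hScoeff : S.coeff (m - 1 - j) = a i h₀ (j + 1) := by
    rw [hS, Polynomial.finset_sum_coeff]
    rw [Finset.sum_eq_single j]
    · rw [Polynomial.coeff_C_mul, Polynomial.coeff_X_pow, if_pos rfl, mul_one]
    · intro j' hj' hne
      rw [Polynomial.coeff_C_mul, Polynomial.coeff_X_pow, if_neg, mul_zero]
      have := Finset.mem_range.mp hj'
      omega
    · intro hni
      exact absurd (Finset.mem_range.mpr hj) hni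
  have hTcoeff : (T + X ^ m * (V - E * Rf - S * W)).coeff (m - 1 - j) = T.coeff (m - 1 - j) := by
    rw [Polynomial.coeff_add]
    have : (X ^ m * (V - E * Rf - S * W)).coeff (m - 1 - j) = 0 := by
      rw [mul_comm, Polynomial.coeff_mul_X_pow', if_neg]
      omega
    rw [this, add_zero]
  rw [← hScoeff, hkey, hTcoeff]


lemma pf_fact1 (k : ℕ) : ∏ l ∈ range k, (k - l) = k.factorial := by
  have h := Finset.prod_range_reflect (fun j => j + 1) k
  have h2 : ∀ j ∈ range k, k - 1 - j + 1 = k - j := by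
    intro j hj; have := Finset.mem_range.mp hj; omega
  rw [Finset.prod_congr rfl h2] at h
  rw [h, Finset.prod_range_add_one_eq_factorial]

lemma pf_fact2 (n h₀ : ℕ) (hh : h₀ ≤ n) :
    ∏ l ∈ Ico (h₀ + 1) (n + 1), (l - h₀) = (n - h₀).factorial := by
  rw [Finset.prod_Ico_eq_prod_range]
  have h2 : ∀ j ∈ range (n + 1 - (h₀ + 1)), h₀ + 1 + j - h₀ = j + 1 := by
    intro j _; omega
  rw [Finset.prod_congr rfl h2, Finset.prod_range_add_one_eq_factorial]
  congr 1; omega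

lemma pf_prod_dist (n h₀ : ℕ) (hh : h₀ ≤ n) :
    ∏ l ∈ (range (n + 1)).erase h₀, |(h₀ : ℚ) - (l : ℚ)| =
      ((h₀.factorial * (n - h₀).factorial : ℕ) : ℚ) := by
  have hsplit : (range (n + 1)).erase h₀ = range h₀ ∪ Ico (h₀ + 1) (n + 1) := by
    ext l
    simp only [Finset.mem_erase, Finset.mem_range, Finset.mem_union, Finset.mem_Ico]
    omega
  have hdisj : Disjoint (range h₀) (Ico (h₀ + 1) (n + 1)) := by
    rw [Finset.disjoint_left]
    intro l hl hl'
    simp only [Finset.mem_range] at hl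
    simp only [Finset.mem_Ico] at hl'
    omega
  rw [hsplit, Finset.prod_union hdisj]
  have p1 : ∏ l ∈ range h₀, |(h₀ : ℚ) - (l : ℚ)| = ((h₀.factorial : ℕ) : ℚ) := by
    rw [← pf_fact1 h₀, Nat.cast_prod]
    refine Finset.prod_congr rfl fun l hl => ?_
    have hlh := Finset.mem_range.mp hl
    rw [abs_of_nonneg (sub_nonneg.mpr (by exact_mod_cast hlh.le : (l:ℚ) ≤ (h₀:ℚ)))]
    push_cast [Nat.cast_sub hlh.le]
    ring
  have p2 : ∏ l ∈ Ico (h₀ + 1) (n + 1), |(h₀ : ℚ) - (l : ℚ)| = (((n - h₀).factorial : ℕ) : ℚ) := by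
    rw [← pf_fact2 n h₀ hh, Nat.cast_prod]
    refine Finset.prod_congr rfl fun l hl => ?_
    have hlh := (Finset.mem_Ico.mp hl).1
    rw [abs_sub_comm, abs_of_nonneg (sub_nonneg.mpr (by exact_mod_cast (by omega : h₀ ≤ l) : (h₀:ℚ) ≤ (l:ℚ)))]
    push_cast [Nat.cast_sub (by omega : h₀ ≤ l)]
    ring
  rw [p1, p2]
  push_cast
  ring

lemma pf_prod_dist_top (n : ℕ) :
    ∏ l ∈ range (n + 1), |((n + 1 : ℕ) : ℚ) - (l : ℚ)| = (((n + 1).factorial : ℕ) : ℚ) := by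
  rw [← pf_fact1 (n + 1), Nat.cast_prod]
  refine Finset.prod_congr rfl fun l hl => ?_
  have hlh := Finset.mem_range.mp hl
  rw [abs_of_nonneg (sub_nonneg.mpr (by exact_mod_cast hlh.le : (l:ℚ) ≤ ((n+1:ℕ):ℚ)))]
  push_cast [Nat.cast_sub hlh.le]
  ring

/-- coefficient formula for h₀ ≤ n -/
lemma pf_coeff_low (m n : ℕ) (a : ℕ → ℕ → ℕ → ℚ) (ha : IsPFD m n a) (i : ℕ)
    (hi : 1 ≤ i) (him : i ≤ m) (h₀ : ℕ) (hh : h₀ ≤ n) :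
    ∀ j, j < m → a i h₀ (j + 1) =
      ((upoly m ((h₀ : ℚ) - ((n + 1 : ℕ) : ℚ))) ^ i *
        ∏ l ∈ (range (n + 1)).erase h₀, (upoly m ((h₀ : ℚ) - (l : ℚ))) ^ m).coeff (m - 1 - j) := by
  set c : ℚ := (h₀ : ℚ) - ((n + 1 : ℕ) : ℚ) with hc
  have hcne : c ≠ 0 := by
    rw [hc]
    refine sub_ne_zero.mpr ?_
    exact_mod_cast (by omega : h₀ ≠ n + 1)
  have hdne : ∀ l ∈ (range (n + 1)).erase h₀, (h₀ : ℚ) - (l : ℚ) ≠ 0 := by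
    intro l hl
    refine sub_ne_zero.mpr ?_
    exact_mod_cast (Finset.mem_erase.mp hl).1.symm
  set P : Polynomial ℚ := ∏ l ∈ (range (n + 1)).erase h₀, (upoly m ((h₀ : ℚ) - (l : ℚ))) ^ m with hP
  have hidx : (range (n + 2)).erase h₀ = insert (n + 1) ((range (n + 1)).erase h₀) := by
    rw [Finset.range_add_one, Finset.erase_insert_of_ne (by omega : n + 1 ≠ h₀)]
  have hnotmem : (n + 1) ∉ (range (n + 1)).erase h₀ :=
    fun hmem => Finset.notMem_range_self (Finset.mem_of_mem_erase hmem)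
  apply pf_extract m n a ha i hi him h₀ (by rw [Finset.mem_range]; omega)
    ((upoly m c) ^ m * P)
  · -- Unip m (G * Rf)
    have hGsplit : (∏ l ∈ (range (n + 2)).erase h₀, (X + C ((h₀ : ℚ) - (l : ℚ))) ^ m) *
        ((upoly m c) ^ m * P) =
        ((X + C c) * upoly m c) ^ m *
          ∏ l ∈ (range (n + 1)).erase h₀,
            ((X + C ((h₀ : ℚ) - (l : ℚ))) * upoly m ((h₀ : ℚ) - (l : ℚ))) ^ m := by
      rw [hidx, Finset.prod_insert hnotmem, hP, ← hc]
      simp only [mul_pow, Finset.prod_mul_distrib]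
      ring
    rw [hGsplit]
    refine Unip.mul (Unip.pow (upoly_inv m hcne) m) (Unip.prod fun l hl => ?_)
    exact Unip.pow (upoly_inv m (hdne l hl)) m
  · -- N' * Rf = T + X^m * V
    obtain ⟨W₂, hW₂⟩ := Unip.pow (upoly_inv m hcne) (m - i)
    refine ⟨W₂ * ((upoly m c) ^ i * P), ?_⟩
    have hpowsplit : (upoly m c) ^ m = (upoly m c) ^ (m - i) * (upoly m c) ^ i := by
      rw [← pow_add]; congr 1; omega
    calc (X + C c) ^ (m - i) * ((upoly m c) ^ m * P)
        = ((X + C c) * upoly m c) ^ (m - i) * ((upoly m c) ^ i * P) := by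
          rw [hpowsplit, mul_pow]; ring
    _ = (1 + X ^ m * W₂) * ((upoly m c) ^ i * P) := by rw [hW₂]
    _ = (upoly m c) ^ i * P + X ^ m * (W₂ * ((upoly m c) ^ i * P)) := by ring

/-- coefficient formula for h₀ = n+1 -/
lemma pf_coeff_top (m n : ℕ) (a : ℕ → ℕ → ℕ → ℚ) (ha : IsPFD m n a) (i : ℕ)
    (hi : 1 ≤ i) (him : i ≤ m) :
    ∀ j, j < m → a i (n + 1) (j + 1) =
      (X ^ (m - i) *
        ∏ l ∈ range (n + 1), (upoly m (((n + 1 : ℕ) : ℚ) - (l : ℚ))) ^ m).coeff (m - 1 - j) := by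
  have hdne : ∀ l ∈ range (n + 1), ((n + 1 : ℕ) : ℚ) - (l : ℚ) ≠ 0 := by
    intro l hl
    refine sub_ne_zero.mpr ?_
    exact_mod_cast (by have := Finset.mem_range.mp hl; omega : (n + 1 : ℕ) ≠ l)
  set P : Polynomial ℚ := ∏ l ∈ range (n + 1), (upoly m (((n + 1 : ℕ) : ℚ) - (l : ℚ))) ^ m with hP
  have hidx : (range (n + 2)).erase (n + 1) = range (n + 1) := by
    rw [Finset.range_add_one, Finset.erase_insert Finset.notMem_range_self]
  apply pf_extract m n a ha i hi him (n + 1) (by rw [Finset.mem_range]; omega) P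
  · have hGsplit : (∏ l ∈ (range (n + 2)).erase (n + 1),
        (X + C (((n + 1 : ℕ) : ℚ) - (l : ℚ))) ^ m) * P =
        ∏ l ∈ range (n + 1),
          ((X + C (((n + 1 : ℕ) : ℚ) - (l : ℚ))) * upoly m (((n + 1 : ℕ) : ℚ) - (l : ℚ))) ^ m := by
      rw [hidx, hP]
      simp only [mul_pow, Finset.prod_mul_distrib]
    rw [hGsplit]
    exact Unip.prod fun l hl => Unip.pow (upoly_inv m (hdne l hl)) m
  · exact ⟨0, by rw [sub_self, C_0, add_zero, mul_zero, add_zero]⟩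


lemma pf_one_le_abs {p q : ℕ} (hpq : p ≠ q) : 1 ≤ |(p : ℚ) - (q : ℚ)| := by
  rcases Nat.lt_or_ge p q with h | h
  · rw [abs_sub_comm, abs_of_nonneg (sub_nonneg.mpr (by exact_mod_cast h.le))]
    have he : ((q - p : ℕ) : ℚ) = (q : ℚ) - p := by push_cast [Nat.cast_sub h.le]; ring
    rw [← he]
    exact_mod_cast (by omega : 1 ≤ q - p)
  · have hpq' : q < p := by omega
    rw [abs_of_nonneg (sub_nonneg.mpr (by exact_mod_cast hpq'.le))]
    have he : ((p - q : ℕ) : ℚ) = (p : ℚ) - q := by push_cast [Nat.cast_sub hpq'.le]; ring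
    rw [← he]
    exact_mod_cast (by omega : 1 ≤ p - q)

lemma pf_choose_nat (m n i k : ℕ) (hm : 2 ≤ m) (hi : 1 ≤ i) (him : i ≤ m) (hk : k ≤ m - 1) :
    ((i - 1 + m * n) + k).choose k ≤ (m * (n + 2) - 2).choose (m - 1) := by
  have h1 := pf_choose_le_add ((i - 1 + m * n) + k) k (m - 1 - k)
  have h2 : k + (m - 1 - k) = m - 1 := by omega
  rw [h2] at h1
  refine h1.trans (Nat.choose_le_choose (m - 1) ?_)
  have e1 : m * (n + 2) = m * n + 2 * m := by ring
  omega

lemma pf_choose_nat_top (m n k' : ℕ) (hm : 2 ≤ m) (hk : k' ≤ m - 1) :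
    ((m * (n + 1) - 1) + k').choose k' ≤ (m * (n + 2) - 2).choose (m - 1) := by
  have h1 := pf_choose_le_add ((m * (n + 1) - 1) + k') k' (m - 1 - k')
  have h2 : k' + (m - 1 - k') = m - 1 := by omega
  rw [h2] at h1
  refine h1.trans (Nat.choose_le_choose (m - 1) ?_)
  have e1 : m * (n + 2) = m * (n + 1) + m := by ring
  have e2 : 1 ≤ m * (n + 1) := by nlinarith
  omega

lemma pf_n_le (n h₀ : ℕ) (hh : h₀ ≤ n) :
    n.factorial ≤ 2 ^ n * (h₀.factorial * (n - h₀).factorial) := by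
  have hc : n.choose h₀ ≤ 2 ^ n := by
    calc n.choose h₀ ≤ ∑ t ∈ range (n + 1), n.choose t :=
      Finset.single_le_sum (fun t _ => Nat.zero_le _) (Finset.mem_range.mpr (by omega))
    _ = 2 ^ n := Nat.sum_range_choose n
  calc n.factorial = n.choose h₀ * h₀.factorial * (n - h₀).factorial :=
        (Nat.choose_mul_factorial_mul_factorial hh).symm
  _ ≤ 2 ^ n * h₀.factorial * (n - h₀).factorial :=
      Nat.mul_le_mul_right _ (Nat.mul_le_mul_right _ hc)
  _ = 2 ^ n * (h₀.factorial * (n - h₀).factorial) := by ring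

lemma pf_inv_pow_le (m n F : ℕ) (hF : 0 < F) (hle : n.factorial ≤ 2 ^ n * F) :
    ((F : ℚ))⁻¹ ^ m ≤ ((2 : ℚ) ^ n) ^ m / ((n.factorial : ℚ)) ^ m := by
  have hFq : (0 : ℚ) < (F : ℚ) := by exact_mod_cast hF
  have hnf : (0 : ℚ) < (n.factorial : ℚ) := by exact_mod_cast n.factorial_pos
  have h1 : ((F : ℚ))⁻¹ ≤ (2 : ℚ) ^ n / (n.factorial : ℚ) := by
    rw [inv_le_iff_one_le_mul₀ hFq, div_mul_eq_mul_div, le_div_iff₀ hnf, one_mul]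
    exact_mod_cast hle
  calc ((F : ℚ))⁻¹ ^ m ≤ ((2 : ℚ) ^ n / (n.factorial : ℚ)) ^ m :=
    pow_le_pow_left₀ (by positivity) h1 m
  _ = ((2 : ℚ) ^ n) ^ m / ((n.factorial : ℚ)) ^ m := div_pow _ _ m

/-- uniform bound on the PFD coefficients -/
lemma pf_a_bound (m n : ℕ) (hm : 2 ≤ m) (a : ℕ → ℕ → ℕ → ℚ) (ha : IsPFD m n a) (i : ℕ)
    (hi : 1 ≤ i) (him : i ≤ m) (h₀ : ℕ) (hh₀ : h₀ ≤ n + 1) (j : ℕ) (hj : j < m) :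
    |a i h₀ (j + 1)| ≤
      (((m * (n + 2) - 2).choose (m - 1) : ℚ)) * (((2 : ℚ) ^ n) ^ m / ((n.factorial : ℚ)) ^ m) := by
  set k : ℕ := m - 1 - j with hk
  have hkm : k ≤ m - 1 := by omega
  have hCnn : (0 : ℚ) ≤ (((m * (n + 2) - 2).choose (m - 1) : ℕ) : ℚ) := by positivity
  rcases Nat.lt_or_ge h₀ (n + 1) with hlow | htop
  · -- case h₀ ≤ n
    have hh : h₀ ≤ n := by omega
    set c : ℚ := (h₀ : ℚ) - ((n + 1 : ℕ) : ℚ) with hc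
    have hcabs : 1 ≤ |c| := pf_one_le_abs (by omega : h₀ ≠ n + 1)
    have hceq := pf_coeff_low m n a ha i hi him h₀ hh j hj
    rw [hceq]
    have hdomc : DomG m ((upoly m c) ^ i) (|c|⁻¹ ^ i) (1 * i) :=
      DomG.pow (by positivity) (DomG.upoly m hcabs) i
    have hdomP : DomG m (∏ l ∈ (range (n + 1)).erase h₀, (upoly m ((h₀ : ℚ) - (l : ℚ))) ^ m)
        (∏ l ∈ (range (n + 1)).erase h₀, |(h₀ : ℚ) - (l : ℚ)|⁻¹ ^ m)
        (m * ((range (n + 1)).erase h₀).card) := by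
      refine DomG.prod (fun l hl => by positivity) (fun l hl => ?_)
      have h1 : DomG m ((upoly m ((h₀ : ℚ) - (l : ℚ))) ^ m) (|(h₀ : ℚ) - (l : ℚ)|⁻¹ ^ m) (1 * m) :=
        DomG.pow (by positivity)
          (DomG.upoly m (pf_one_le_abs
            (fun he => (Finset.mem_erase.mp hl).1 (by exact_mod_cast he.symm)))) m
      rwa [one_mul] at h1
    have hcard : ((range (n + 1)).erase h₀).card = n := by
      rw [Finset.card_erase_of_mem (Finset.mem_range.mpr (by omega)), Finset.card_range]
      omega
    rw [hcard] at hdomP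
    have hdom := DomG.mul (by positivity)
      (Finset.prod_nonneg fun l hl => by positivity) hdomc hdomP
    rw [one_mul] at hdom
    have hb1 := hdom k
    have hexp : i + m * n = (i - 1 + m * n) + 1 := by omega
    have hb2 : ((gpoly m) ^ (i + m * n)).coeff k ≤ (((i - 1 + m * n) + k).choose k : ℚ) := by
      rw [hexp]; exact gpow_coeff_le m (i - 1 + m * n) k
    have hb3 : (((i - 1 + m * n + k).choose k : ℕ) : ℚ) ≤
        (((m * (n + 2) - 2).choose (m - 1) : ℕ) : ℚ) := by
      exact_mod_cast pf_choose_nat m n i k hm hi him hkm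
    set γ : ℚ := |c|⁻¹ ^ i * ∏ l ∈ (range (n + 1)).erase h₀, |(h₀ : ℚ) - (l : ℚ)|⁻¹ ^ m with hγ
    have hγnn : 0 ≤ γ := by
      rw [hγ]
      exact mul_nonneg (by positivity) (Finset.prod_nonneg fun l hl => by positivity)
    have hγle : γ ≤ ((2 : ℚ) ^ n) ^ m / ((n.factorial : ℚ)) ^ m := by
      have hc1 : |c|⁻¹ ^ i ≤ 1 := by
        apply pow_le_one₀ (by positivity)
        rw [inv_le_one_iff₀]; right; exact hcabs
      have hprodeq : ∏ l ∈ (range (n + 1)).erase h₀, |(h₀ : ℚ) - (l : ℚ)|⁻¹ ^ m =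
          (((h₀.factorial * (n - h₀).factorial : ℕ) : ℚ))⁻¹ ^ m := by
        rw [Finset.prod_pow, Finset.prod_inv_distrib, pf_prod_dist n h₀ hh]
      have hF : 0 < h₀.factorial * (n - h₀).factorial :=
        Nat.mul_pos h₀.factorial_pos (n - h₀).factorial_pos
      calc γ = |c|⁻¹ ^ i * (((h₀.factorial * (n - h₀).factorial : ℕ) : ℚ))⁻¹ ^ m := by
            rw [hγ, hprodeq]
      _ ≤ 1 * (((h₀.factorial * (n - h₀).factorial : ℕ) : ℚ))⁻¹ ^ m :=
          mul_le_mul_of_nonneg_right hc1 (by positivity)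
      _ = (((h₀.factorial * (n - h₀).factorial : ℕ) : ℚ))⁻¹ ^ m := one_mul _
      _ ≤ ((2 : ℚ) ^ n) ^ m / ((n.factorial : ℚ)) ^ m :=
          pf_inv_pow_le m n _ hF (pf_n_le n h₀ hh)
    calc |((upoly m c) ^ i * ∏ l ∈ (range (n + 1)).erase h₀,
            (upoly m ((h₀ : ℚ) - (l : ℚ))) ^ m).coeff k|
        ≤ γ * ((gpoly m) ^ (i + m * n)).coeff k := hb1
    _ ≤ γ * (((m * (n + 2) - 2).choose (m - 1) : ℕ) : ℚ) :=
        mul_le_mul_of_nonneg_left (hb2.trans hb3) hγnn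
    _ = (((m * (n + 2) - 2).choose (m - 1) : ℕ) : ℚ) * γ := mul_comm _ _
    _ ≤ (((m * (n + 2) - 2).choose (m - 1) : ℕ) : ℚ) *
          (((2 : ℚ) ^ n) ^ m / ((n.factorial : ℚ)) ^ m) :=
        mul_le_mul_of_nonneg_left hγle hCnn
  · -- case h₀ = n+1
    have he : h₀ = n + 1 := by omega
    subst he
    have hceq := pf_coeff_top m n a ha i hi him j hj
    rw [hceq, Polynomial.X_pow_mul, Polynomial.coeff_mul_X_pow']
    split
    · rename_i hki
      set k' : ℕ := k - (m - i) with hk'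
      have hdomP : DomG m (∏ l ∈ range (n + 1), (upoly m (((n + 1 : ℕ) : ℚ) - (l : ℚ))) ^ m)
          (∏ l ∈ range (n + 1), |((n + 1 : ℕ) : ℚ) - (l : ℚ)|⁻¹ ^ m)
          (m * (range (n + 1)).card) := by
        refine DomG.prod (fun l hl => by positivity) (fun l hl => ?_)
        have h1 : DomG m ((upoly m (((n + 1 : ℕ) : ℚ) - (l : ℚ))) ^ m)
            (|((n + 1 : ℕ) : ℚ) - (l : ℚ)|⁻¹ ^ m) (1 * m) :=
          DomG.pow (by positivity)
            (DomG.upoly m (pf_one_le_abs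
              (by have := Finset.mem_range.mp hl; omega : (n + 1 : ℕ) ≠ l))) m
        rwa [one_mul] at h1
      rw [Finset.card_range] at hdomP
      have hb1 := hdomP k'
      have hexp : m * (n + 1) = (m * (n + 1) - 1) + 1 := by
        have h1 : 0 < m * (n + 1) := Nat.mul_pos (by omega) (by omega)
        omega
      have hb2 : ((gpoly m) ^ (m * (n + 1))).coeff k' ≤ (((m * (n + 1) - 1) + k').choose k' : ℚ) := by
        rw [hexp]; exact gpow_coeff_le m (m * (n + 1) - 1) k'
      have hb3 : ((((m * (n + 1) - 1) + k').choose k' : ℕ) : ℚ) ≤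
          (((m * (n + 2) - 2).choose (m - 1) : ℕ) : ℚ) := by
        exact_mod_cast pf_choose_nat_top m n k' hm (by omega)
      set γ : ℚ := ∏ l ∈ range (n + 1), |((n + 1 : ℕ) : ℚ) - (l : ℚ)|⁻¹ ^ m with hγ
      have hγnn : 0 ≤ γ := Finset.prod_nonneg fun l hl => by positivity
      have hγle : γ ≤ ((2 : ℚ) ^ n) ^ m / ((n.factorial : ℚ)) ^ m := by
        have hprodeq : γ = ((((n + 1).factorial : ℕ) : ℚ))⁻¹ ^ m := by
          rw [hγ, Finset.prod_pow, Finset.prod_inv_distrib, pf_prod_dist_top n]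
        rw [hprodeq]
        refine pf_inv_pow_le m n _ (n + 1).factorial_pos ?_
        calc n.factorial ≤ (n + 1).factorial := Nat.factorial_le (by omega)
        _ ≤ 2 ^ n * (n + 1).factorial := Nat.le_mul_of_pos_left _ (by positivity)
      calc |(∏ l ∈ range (n + 1), (upoly m (((n + 1 : ℕ) : ℚ) - (l : ℚ))) ^ m).coeff k'|
          ≤ γ * ((gpoly m) ^ (m * (n + 1))).coeff k' := hb1
      _ ≤ γ * (((m * (n + 2) - 2).choose (m - 1) : ℕ) : ℚ) :=
          mul_le_mul_of_nonneg_left (hb2.trans hb3) hγnn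
      _ = (((m * (n + 2) - 2).choose (m - 1) : ℕ) : ℚ) * γ := mul_comm _ _
      _ ≤ (((m * (n + 2) - 2).choose (m - 1) : ℕ) : ℚ) *
            (((2 : ℚ) ^ n) ^ m / ((n.factorial : ℚ)) ^ m) :=
          mul_le_mul_of_nonneg_left hγle hCnn
    · rw [abs_zero]
      positivity

/-- size estimate `|A_{i,j,n+1}(α)| ≤ (2^m(1+|α|)/|α|)·(n+1)^m·((1+|α|)2^m)^{n+1}/(n!)^m`
for nonzero complex `α`. -/
theorem pade_coeff_bound (m n : ℕ) (hm : 2 ≤ m) (a : ℕ → ℕ → ℕ → ℚ)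
    (ha : IsPFD m n a) (α : ℂ) (hα : α ≠ 0) :
    ∀ i j : ℕ, 1 ≤ i → i ≤ m → j ≤ m - 1 →
      ‖Polynomial.aeval α (padeA n a i j)‖ ≤
        (2 ^ m * (1 + ‖α‖) / ‖α‖) * ((n : ℝ) + 1) ^ m *
          ((1 + ‖α‖) * 2 ^ m) ^ (n + 1) / ((n.factorial : ℝ)) ^ m := by
  intro i j hi him hjm
  have hjm' : j < m := by omega
  set A : ℝ := ‖α‖ with hA
  have hA0 : 0 < A := norm_pos_iff.mpr hα
  have hA1 : (0 : ℝ) ≤ 1 + A := by linarith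
  have hnf : (0 : ℝ) < ((n.factorial : ℕ) : ℝ) := by exact_mod_cast n.factorial_pos
  -- the uniform coefficient bound, in ℝ
  set K : ℝ := (((m * (n + 2) - 2).choose (m - 1) : ℕ) : ℝ) * ((2 : ℝ) ^ n) ^ m /
      ((n.factorial : ℝ)) ^ m with hK
  have hcoef : ∀ h ∈ range (n + 2), ((|a i h (j + 1)| : ℚ) : ℝ) ≤ K := by
    intro h hh
    have hb := pf_a_bound m n hm a ha i hi him h
      (by have := Finset.mem_range.mp hh; omega) j hjm'
    have hcast : ((|a i h (j + 1)| : ℚ) : ℝ) ≤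
        (((((m * (n + 2) - 2).choose (m - 1) : ℚ)) *
          (((2 : ℚ) ^ n) ^ m / ((n.factorial : ℚ)) ^ m) : ℚ) : ℝ) := by exact_mod_cast hb
    refine hcast.trans_eq ?_
    rw [hK]
    push_cast
    ring
  have hKnn : 0 ≤ K := by
    rw [hK]; positivity
  -- step 1 : bound |aeval α (padeA n a i j)|
  have hstep1 : ‖Polynomial.aeval α (padeA n a i j)‖ ≤
      ∑ h ∈ range (n + 2), ((|a i h (j + 1)| : ℚ) : ℝ) * (1 + A) ^ h := by
    rw [padeA, map_mul, norm_mul]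
    have h1 : ‖Polynomial.aeval α (Polynomial.C ((j.factorial : ℚ))⁻¹)‖ ≤ 1 := by
      rw [aeval_C, eq_ratCast, ← Complex.ofReal_ratCast, Complex.norm_real, Real.norm_eq_abs]
      rw [← Rat.cast_abs]
      have : |((j.factorial : ℚ))⁻¹| ≤ 1 := by
        rw [abs_of_nonneg (by positivity)]
        rw [inv_le_one_iff₀]
        right
        exact_mod_cast j.factorial_pos
      exact_mod_cast this
    have h2 : ‖Polynomial.aeval α
        (∑ h ∈ range (n + 2), Polynomial.C (a i h (j + 1)) * (1 + Polynomial.X) ^ h)‖ ≤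
        ∑ h ∈ range (n + 2), ((|a i h (j + 1)| : ℚ) : ℝ) * (1 + A) ^ h := by
      rw [map_sum]
      refine (norm_sum_le _ _).trans (Finset.sum_le_sum fun h _ => ?_)
      rw [map_mul, aeval_C, eq_ratCast, map_pow, map_add, map_one, aeval_X, norm_mul, norm_pow]
      have e1 : ‖((a i h (j + 1) : ℚ) : ℂ)‖ = ((|a i h (j + 1)| : ℚ) : ℝ) := by
        rw [← Complex.ofReal_ratCast, Complex.norm_real, Real.norm_eq_abs, Rat.cast_abs]
      rw [e1]
      refine mul_le_mul_of_nonneg_left ?_ (by positivity)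
      refine pow_le_pow_left₀ (norm_nonneg _) ?_ h
      calc ‖1 + α‖ ≤ ‖(1 : ℂ)‖ + ‖α‖ := norm_add_le 1 α
      _ = 1 + A := by rw [norm_one]
    calc ‖Polynomial.aeval α (Polynomial.C ((j.factorial : ℚ))⁻¹)‖ *
        ‖Polynomial.aeval α
          (∑ h ∈ range (n + 2), Polynomial.C (a i h (j + 1)) * (1 + Polynomial.X) ^ h)‖
        ≤ 1 * (∑ h ∈ range (n + 2), ((|a i h (j + 1)| : ℚ) : ℝ) * (1 + A) ^ h) := by
          apply mul_le_mul h1 h2 (norm_nonneg _) zero_le_one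
    _ = ∑ h ∈ range (n + 2), ((|a i h (j + 1)| : ℚ) : ℝ) * (1 + A) ^ h := one_mul _
  -- step 2 : geometric sum
  have hgeom : ∑ h ∈ range (n + 2), (1 + A) ^ h ≤ (1 + A) ^ (n + 2) / A := by
    have hne : (1 : ℝ) + A ≠ 1 := by intro hcon; rw [add_eq_left] at hcon; linarith
    rw [geom_sum_eq hne (n + 2), add_sub_cancel_left]
    gcongr
    linarith
  -- step 3 : choose bound
  have hdag : (((m * (n + 2) - 2).choose (m - 1) : ℕ) : ℝ) ≤ 4 ^ m * ((n : ℝ) + 1) ^ m := by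
    have := pf_dagger m n hm
    calc (((m * (n + 2) - 2).choose (m - 1) : ℕ) : ℝ) ≤ ((4 ^ m * (n + 1) ^ m : ℕ) : ℝ) := by
          exact_mod_cast this
    _ = 4 ^ m * ((n : ℝ) + 1) ^ m := by push_cast; ring
  -- final chain
  have hfin : (4 ^ m * ((n : ℝ) + 1) ^ m) * ((2 : ℝ) ^ n) ^ m / ((n.factorial : ℝ)) ^ m *
      ((1 + A) ^ (n + 2) / A) =
      (2 ^ m * (1 + A) / A) * ((n : ℝ) + 1) ^ m * ((1 + A) * 2 ^ m) ^ (n + 1) /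
        ((n.factorial : ℝ)) ^ m := by
    have h4 : (4 : ℝ) ^ m = 2 ^ m * 2 ^ m := by
      rw [show (4 : ℝ) = 2 * 2 by norm_num, mul_pow]
    rw [h4, mul_pow (1 + A) ((2:ℝ) ^ m) (n + 1)]
    field_simp
    ring
  calc ‖Polynomial.aeval α (padeA n a i j)‖
      ≤ ∑ h ∈ range (n + 2), ((|a i h (j + 1)| : ℚ) : ℝ) * (1 + A) ^ h := hstep1
  _ ≤ ∑ h ∈ range (n + 2), K * (1 + A) ^ h :=
      Finset.sum_le_sum fun h hh =>
        mul_le_mul_of_nonneg_right (hcoef h hh) (pow_nonneg hA1 h)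
  _ = K * ∑ h ∈ range (n + 2), (1 + A) ^ h := by rw [Finset.mul_sum]
  _ ≤ K * ((1 + A) ^ (n + 2) / A) := mul_le_mul_of_nonneg_left hgeom hKnn
  _ ≤ (4 ^ m * ((n : ℝ) + 1) ^ m) * ((2 : ℝ) ^ n) ^ m / ((n.factorial : ℝ)) ^ m *
        ((1 + A) ^ (n + 2) / A) := by
      refine mul_le_mul_of_nonneg_right ?_ (by positivity)
      rw [hK]
      gcongr
  _ = (2 ^ m * (1 + A) / A) * ((n : ℝ) + 1) ^ m * ((1 + A) * 2 ^ m) ^ (n + 1) /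
        ((n.factorial : ℝ)) ^ m := hfin
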